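/- For a finite group G, the following statements are equivalent: (i) every Lagrange subset of G is a factor of G (the strong CFS property); (ii) every Lagrange subset of G is a left factor of G; (iii) every Lagrange subset of G is a right factor of G; (iv) every Lagrange subset of G is both a left factor and a right factor of G; (v) for every Lagrange subset A of G there exists a subset B ⊆ G with G = A · B and G = B · A. -/

import Mathlib

/-- `G = A · B`: every element of `G` can be written in exactly one way as `a * b`
with `a ∈ A` and `b ∈ B`. -/
def IsDirectProd {G : Type*} [Group G] (A B : Set G) : Prop :=
  ∀ g : G, ∃! p : G × G, p.1 ∈ A ∧ p.2 ∈ B ∧ p.1 * p.2 = g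

/-- `A` is a left factor of `G`: there is `B ⊆ G` with `G = A · B`. -/
def IsLeftFactor {G : Type*} [Group G] (A : Set G) : Prop :=
  ∃ B : Set G, IsDirectProd A B

/-- `A` is a right factor of `G`: there is `B ⊆ G` with `G = B · A`. -/
def IsRightFactor {G : Type*} [Group G] (A : Set G) : Prop :=
  ∃ B : Set G, IsDirectProd B A

/-- `A` is a factor of `G`: it is a left factor or a right factor of `G`. -/
def IsFactor {G : Type*} [Group G] (A : Set G) : Prop :=
  IsLeftFactor A ∨ IsRightFactor A

/-- A group `G` has the strong CFS property if every Lagrange subset of `G`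
(i.e. every subset whose cardinality divides `|G|`) is a factor of `G`. -/
def HasStrongCFS (G : Type*) [Group G] : Prop :=
  ∀ A : Set G, Nat.card A ∣ Nat.card G → IsFactor A

namespace Stmt19Aux

variable {G : Type*} [Group G]

/-- Inverting an exact factorization. -/
lemma isDirectProd_inv {A B : Set G} (h : IsDirectProd A B) : IsDirectProd B⁻¹ A⁻¹ := by
  intro g
  obtain ⟨⟨p1, p2⟩, ⟨m1, m2, me⟩, uniq⟩ := h g⁻¹
  refine ⟨(p2⁻¹, p1⁻¹), ⟨by simpa using m2, by simpa using m1, by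
    rw [← mul_inv_rev, me, inv_inv]⟩, ?_⟩
  rintro ⟨q1, q2⟩ ⟨n1, n2, ne⟩
  have : (q2⁻¹, q1⁻¹) = (p1, p2) := by
    refine uniq _ ⟨by simpa using n2, by simpa using n1, ?_⟩
    rw [← mul_inv_rev, ne]
  have h1 : q2⁻¹ = p1 := congrArg Prod.fst this
  have h2 : q1⁻¹ = p2 := congrArg Prod.snd this
  have : q1 = p2⁻¹ := by rw [← h2, inv_inv]
  have : q2 = p1⁻¹ := by rw [← h1, inv_inv]
  simp_all

lemma isLeftFactor_inv_of_isRightFactor {A : Set G} (h : IsRightFactor A) :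
    IsLeftFactor A⁻¹ := by
  obtain ⟨B, hB⟩ := h
  exact ⟨B⁻¹, isDirectProd_inv hB⟩

/-- Restriction of an exact factorization to a subgroup containing `A`. -/
lemma card_dvd_of_isLeftFactor {H : Subgroup G} {A : Set G}
    (hA : A ⊆ (H : Set G)) (h : IsLeftFactor A) : Nat.card A ∣ Nat.card H := by
  obtain ⟨C, hC⟩ := h
  classical
  set C' : Set G := C ∩ (H : Set G) with hC'
  have hf : ∀ p : A × C', p.1.1 * p.2.1 ∈ H :=
    fun p => H.mul_mem (hA p.1.2) p.2.2.2
  let f : A × C' → H := fun p => ⟨p.1.1 * p.2.1, hf p⟩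
  have hinj : Function.Injective f := by
    rintro ⟨⟨a, ha⟩, ⟨c, hc⟩⟩ ⟨⟨a', ha'⟩, ⟨c', hc'⟩⟩ heq
    have hgg : a * c = a' * c' := congrArg Subtype.val heq
    have h1 := (hC (a * c)).unique (y₁ := (a, c)) (y₂ := (a', c'))
      ⟨ha, hc.1, rfl⟩ ⟨ha', hc'.1, hgg.symm⟩
    have e1 : a = a' := congrArg Prod.fst h1
    have e2 : c = c' := congrArg Prod.snd h1
    subst e1; subst e2; rfl
  have hsurj : Function.Surjective f := by
    rintro ⟨g, hg⟩
    obtain ⟨⟨a, c⟩, ⟨haA, hcC, heq⟩, -⟩ := hC g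
    have hcH : c ∈ (H : Set G) := by
      have : c = a⁻¹ * g := by rw [← heq]; group
      rw [this]; exact H.mul_mem (H.inv_mem (hA haA)) hg
    exact ⟨⟨⟨a, haA⟩, ⟨c, hcC, hcH⟩⟩, Subtype.ext heq⟩
  have hcard : Nat.card H = Nat.card A * Nat.card C' := by
    rw [← Nat.card_prod]
    exact (Nat.card_eq_of_bijective f ⟨hinj, hsurj⟩).symm
  exact ⟨Nat.card C', hcard⟩

lemma card_inv_set (A : Set G) : Nat.card ↥(A⁻¹) = Nat.card A := by
  rw [Nat.card_coe_set_eq, Nat.card_coe_set_eq, Set.ncard_inv]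

lemma card_dvd_of_isFactor {H : Subgroup G} {A : Set G}
    (hA : A ⊆ (H : Set G)) (h : IsFactor A) : Nat.card A ∣ Nat.card H := by
  rcases h with h | h
  · exact card_dvd_of_isLeftFactor hA h
  · have hA' : A⁻¹ ⊆ (H : Set G) := by
      intro x hx
      have : x⁻¹ ∈ A := hx
      simpa using H.inv_mem (hA this)
    have := card_dvd_of_isLeftFactor hA' (isLeftFactor_inv_of_isRightFactor h)
    rwa [card_inv_set] at this

end Stmt19Aux

section Stmt19Main

open Stmt19Aux

variable {G : Type*} [Group G]

/-- Key combinatorial lemma ("Lemma D", left version): if `h₀ ∈ H`, `y₀ ∉ H`,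
`|H| ≥ 3` and some nontrivial power of `y₀⁻¹ * h₀` lies in `H`, then
`(H \ {h₀}) ∪ {y₀}` is not a left factor. -/
lemma notLeftFactor_D [Finite G] (H : Subgroup G) (hm : 3 ≤ Nat.card H)
    {h₀ y₀ : G} (hh₀ : h₀ ∈ H) (hy₀ : y₀ ∉ H)
    (k : ℕ) (hk : (y₀⁻¹ * h₀) ^ k ∈ H) (hk1 : (y₀⁻¹ * h₀) ^ k ≠ 1) :
    ¬ IsLeftFactor ((H : Set G) \ {h₀} ∪ {y₀}) := by
  rintro ⟨C, hC⟩
  set A : Set G := (H : Set G) \ {h₀} ∪ {y₀} with hA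
  set A₀ : Set G := (H : Set G) \ {h₀} with hA₀
  have hHn : (H : Set G).ncard = Nat.card H := by
    rw [← Nat.card_coe_set_eq]; rfl
  -- at most one element of C per right coset of H
  have key : ∀ c ∈ C, ∀ c' ∈ C, c' * c⁻¹ ∈ H → c' = c := by
    intro c hc c' hc' hmem
    by_contra hne
    have hdisj : Disjoint ((· * c) '' A₀) ((· * c') '' A₀) := by
      rw [Set.disjoint_left]
      rintro g ⟨h₁, hh₁, rfl⟩ ⟨h₂, hh₂, heq⟩
      have h1 := (hC (h₁ * c)).unique (y₁ := (h₁, c)) (y₂ := (h₂, c'))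
        ⟨Or.inl hh₁, hc, rfl⟩ ⟨Or.inl hh₂, hc', heq⟩
      exact hne (congrArg Prod.snd h1).symm
    have hsub : ((· * c) '' A₀) ∪ ((· * c') '' A₀) ⊆ (· * c) '' (H : Set G) := by
      rintro g (⟨h₁, hh₁, rfl⟩ | ⟨h₂, hh₂, rfl⟩)
      · exact ⟨h₁, hh₁.1, rfl⟩
      · refine ⟨h₂ * (c' * c⁻¹), H.mul_mem hh₂.1 hmem, ?_⟩
        group
    have hcard1 : ((· * c) '' A₀).ncard = Nat.card H - 1 := by
      rw [Set.ncard_image_of_injective _ (mul_left_injective c), hA₀,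
        Set.ncard_diff_singleton_of_mem hh₀, hHn]
    have hcard2 : ((· * c') '' A₀).ncard = Nat.card H - 1 := by
      rw [Set.ncard_image_of_injective _ (mul_left_injective c'), hA₀,
        Set.ncard_diff_singleton_of_mem hh₀, hHn]
    have hcard3 : ((· * c) '' (H : Set G)).ncard = Nat.card H := by
      rw [Set.ncard_image_of_injective _ (mul_left_injective c), hHn]
    have hle := Set.ncard_le_ncard hsub (Set.toFinite _)
    rw [Set.ncard_union_eq hdisj (Set.toFinite _) (Set.toFinite _), hcard1, hcard2,
      hcard3] at hle
    omega
  -- C is closed under left multiplication by u = y₀⁻¹ * h₀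
  have step1 : ∀ c ∈ C, (y₀⁻¹ * h₀) * c ∈ C := by
    intro c hc
    obtain ⟨⟨a, c'⟩, ⟨haA, hc'C, heq⟩, -⟩ := hC (h₀ * c)
    rcases haA with ⟨haH, hane⟩ | hay
    · exfalso
      have hcc' : c' * c⁻¹ ∈ H := by
        have hc'eq : c' = a⁻¹ * h₀ * c := by
          rw [mul_assoc, ← heq]; group
        rw [hc'eq]
        have : a⁻¹ * h₀ * c * c⁻¹ = a⁻¹ * h₀ := by group
        rw [this]
        exact H.mul_mem (H.inv_mem haH) hh₀
      have hcc := key c hc c' hc'C hcc'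
      rw [hcc] at heq
      exact hane (mul_right_cancel heq)
    · have hay' : a = y₀ := hay
      have : c' = (y₀⁻¹ * h₀) * c := by
        subst hay'
        rw [mul_assoc, ← heq]; group
      rwa [← this]
  have step2 : ∀ n : ℕ, ∀ c ∈ C, (y₀⁻¹ * h₀) ^ n * c ∈ C := by
    intro n
    induction n with
    | zero => intro c hc; simpa using hc
    | succ n ih =>
      intro c hc
      have : (y₀⁻¹ * h₀) ^ (n + 1) * c = (y₀⁻¹ * h₀) ^ n * ((y₀⁻¹ * h₀) * c) := by
        rw [pow_succ]; group
      rw [this]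
      exact ih _ (step1 c hc)
  obtain ⟨⟨a, c⟩, ⟨-, hcC, -⟩, -⟩ := hC 1
  have h3 := step2 k c hcC
  have h4 : ((y₀⁻¹ * h₀) ^ k * c) * c⁻¹ ∈ H := by
    have : ((y₀⁻¹ * h₀) ^ k * c) * c⁻¹ = (y₀⁻¹ * h₀) ^ k := by group
    rwa [this]
  have h5 := key c hcC _ h3 h4
  exact hk1 (by rwa [mul_eq_right] at h5)

lemma inv_shape_D (H : Subgroup G) (h₀ y₀ : G) :
    ((H : Set G) \ {h₀} ∪ {y₀})⁻¹ = ((H : Set G) \ {h₀⁻¹} ∪ {y₀⁻¹}) := by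
  ext x
  simp only [Set.mem_inv, Set.mem_union, Set.mem_diff, Set.mem_singleton_iff,
    SetLike.mem_coe]
  constructor
  · rintro (⟨hH, hne⟩ | he)
    · exact Or.inl ⟨(H.inv_mem_iff).mp hH, fun h => hne (by rw [h]; simp)⟩
    · exact Or.inr (by rw [← he, inv_inv])
  · rintro (⟨hH, hne⟩ | he)
    · exact Or.inl ⟨H.inv_mem hH, fun h => hne (by rw [← h]; simp)⟩
    · exact Or.inr (by rw [he, inv_inv])

/-- "Lemma D": the subset `(H \ {h₀}) ∪ {y₀}` is not a factor. -/
lemma notFactor_D [Finite G] (H : Subgroup G) (hm : 3 ≤ Nat.card H)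
    {h₀ y₀ : G} (hh₀ : h₀ ∈ H) (hy₀ : y₀ ∉ H)
    (kL kR : ℕ) (hkL : (y₀⁻¹ * h₀) ^ kL ∈ H) (hkL1 : (y₀⁻¹ * h₀) ^ kL ≠ 1)
    (hkR : (y₀ * h₀⁻¹) ^ kR ∈ H) (hkR1 : (y₀ * h₀⁻¹) ^ kR ≠ 1) :
    ¬ IsFactor ((H : Set G) \ {h₀} ∪ {y₀}) := by
  rintro (hl | hr)
  · exact notLeftFactor_D H hm hh₀ hy₀ kL hkL hkL1 hl
  · have hlf := isLeftFactor_inv_of_isRightFactor hr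
    rw [inv_shape_D] at hlf
    refine notLeftFactor_D H hm (H.inv_mem hh₀)
      (fun h => hy₀ (by simpa using H.inv_mem h)) kR ?_ ?_ hlf
    · simpa using hkR
    · simpa using hkR1

/-- Cardinality of the "Lemma D" subset. -/
lemma card_shape_D [Finite G] (H : Subgroup G) (hm : 1 ≤ Nat.card H)
    {h₀ y₀ : G} (hh₀ : h₀ ∈ H) (hy₀ : y₀ ∉ H) :
    Nat.card ↥((H : Set G) \ {h₀} ∪ {y₀}) = Nat.card H := by
  have hHn : (H : Set G).ncard = Nat.card H := by
    rw [← Nat.card_coe_set_eq]; rfl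
  rw [Nat.card_coe_set_eq]
  have hdisj : Disjoint ((H : Set G) \ {h₀}) {y₀} := by
    rw [Set.disjoint_right]
    rintro x rfl
    exact fun h => hy₀ h.1
  rw [Set.ncard_union_eq hdisj (Set.toFinite _) (Set.toFinite _),
    Set.ncard_diff_singleton_of_mem hh₀, hHn, Set.ncard_singleton]
  omega

/-- "Lemma E", left version. -/
lemma notLeftFactor_E [Finite G] (H : Subgroup G) (hm : 5 ≤ Nat.card H)
    {h₀ h₁ y₀ y₁ : G} (hh₀ : h₀ ∈ H) (hh₁ : h₁ ∈ H) (hhne : h₀ ≠ h₁)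
    (hy₀ : y₀ ∉ H) (hy₁ : y₁ ∉ H) (hyne : y₀ ≠ y₁)
    (hY : y₁ * y₀⁻¹ ∈ H)
    (i1 : y₁ * y₀⁻¹ * h₀ ≠ h₁) (i2 : y₀ * y₁⁻¹ * h₀ ≠ h₁) :
    ¬ IsLeftFactor ((H : Set G) \ {h₀, h₁} ∪ {y₀, y₁}) := by
  rintro ⟨C, hC⟩
  set A₀ : Set G := (H : Set G) \ {h₀, h₁} with hA₀
  have hHn : (H : Set G).ncard = Nat.card H := by
    rw [← Nat.card_coe_set_eq]; rfl
  have key : ∀ c ∈ C, ∀ c' ∈ C, c' * c⁻¹ ∈ H → c' = c := by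
    intro c hc c' hc' hmem
    by_contra hne
    have hdisj : Disjoint ((· * c) '' A₀) ((· * c') '' A₀) := by
      rw [Set.disjoint_left]
      rintro g ⟨h₁', hh₁, rfl⟩ ⟨h₂, hh₂, heq⟩
      have h1 := (hC (h₁' * c)).unique (y₁ := (h₁', c)) (y₂ := (h₂, c'))
        ⟨Or.inl hh₁, hc, rfl⟩ ⟨Or.inl hh₂, hc', heq⟩
      exact hne (congrArg Prod.snd h1).symm
    have hsub : ((· * c) '' A₀) ∪ ((· * c') '' A₀) ⊆ (· * c) '' (H : Set G) := by
      rintro g (⟨h₁', hh₁, rfl⟩ | ⟨h₂, hh₂, rfl⟩)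
      · exact ⟨h₁', hh₁.1, rfl⟩
      · refine ⟨h₂ * (c' * c⁻¹), H.mul_mem hh₂.1 hmem, ?_⟩
        group
    have hpair : ({h₀, h₁} : Set G) ⊆ (H : Set G) := by
      rintro x (rfl | rfl) <;> assumption
    have hA₀card : A₀.ncard = Nat.card H - 2 := by
      rw [hA₀, Set.ncard_diff hpair, Set.ncard_pair hhne, hHn]
    have hcard1 : ((· * c) '' A₀).ncard = Nat.card H - 2 := by
      rw [Set.ncard_image_of_injective _ (mul_left_injective c), hA₀card]
    have hcard2 : ((· * c') '' A₀).ncard = Nat.card H - 2 := by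
      rw [Set.ncard_image_of_injective _ (mul_left_injective c'), hA₀card]
    have hcard3 : ((· * c) '' (H : Set G)).ncard = Nat.card H := by
      rw [Set.ncard_image_of_injective _ (mul_left_injective c), hHn]
    have hle := Set.ncard_le_ncard hsub (Set.toFinite _)
    rw [Set.ncard_union_eq hdisj (Set.toFinite _) (Set.toFinite _), hcard1, hcard2,
      hcard3] at hle
    omega
  obtain ⟨⟨a, c₀⟩, ⟨-, hc₀C, -⟩, -⟩ := hC 1
  obtain ⟨⟨a, c'⟩, ⟨haA, hc'C, heq⟩, -⟩ := hC (h₀ * c₀)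
  rcases haA with ⟨haH, hane⟩ | hay
  · -- a ∈ A₀ : impossible
    have hcc' : c' * c₀⁻¹ ∈ H := by
      have hc'eq : c' = a⁻¹ * h₀ * c₀ := by
        rw [mul_assoc, ← heq]; group
      rw [hc'eq]
      have : a⁻¹ * h₀ * c₀ * c₀⁻¹ = a⁻¹ * h₀ := by group
      rw [this]
      exact H.mul_mem (H.inv_mem haH) hh₀
    have hcc := key c₀ hc₀C c' hc'C hcc'
    rw [hcc] at heq
    exact hane (Or.inl (mul_right_cancel heq))
  · -- a = y₀ or a = y₁
    rcases hay with hay' | hay'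
    · -- a = y₀ : h₀ * c₀ = y₀ * c'
      have heq0 : y₀ * c' = h₀ * c₀ := by rw [← hay']; exact heq
      have hc'eq : c' = y₀⁻¹ * h₀ * c₀ := by
        rw [mul_assoc, ← heq0]; group
      set v : G := y₁ * c' with hv
      have hvc : v * c₀⁻¹ = y₁ * y₀⁻¹ * h₀ := by
        rw [hv, hc'eq]; group
      have hvH : v * c₀⁻¹ ∈ H := by rw [hvc]; exact H.mul_mem hY hh₀
      set h'' : G := v * c₀⁻¹ with hh''
      have hveq : v = h'' * c₀ := by rw [hh'']; group
      by_cases e0 : h'' = h₀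
      · -- v = h₀ * c₀, two singleton representations
        have hv0 : v = h₀ * c₀ := by rw [hveq, e0]
        have h1 := (hC (h₀ * c₀)).unique (y₁ := (y₁, c')) (y₂ := (y₀, c'))
          ⟨Or.inr (Or.inr rfl), hc'C, hv0 ▸ rfl⟩ ⟨Or.inr (Or.inl rfl), hc'C, heq0⟩
        exact hyne (congrArg Prod.fst h1).symm
      by_cases e1 : h'' = h₁
      · exact i1 (by rw [← hvc]; exact e1)
      · -- h'' ∈ A₀ : two representations of v
        have h1 := (hC v).unique (y₁ := (y₁, c')) (y₂ := (h'', c₀))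
          ⟨Or.inr (Or.inr rfl), hc'C, rfl⟩
          ⟨Or.inl ⟨hvH, by rintro (h | h); exacts [e0 h, e1 h]⟩, hc₀C, hveq.symm⟩
        exact hy₁ (by have e : y₁ = h'' := congrArg Prod.fst h1; rw [e]; exact hvH)
    · -- a = y₁ : h₀ * c₀ = y₁ * c'
      have heq0 : y₁ * c' = h₀ * c₀ := by rw [← hay']; exact heq
      have hc'eq : c' = y₁⁻¹ * h₀ * c₀ := by
        rw [mul_assoc, ← heq0]; group
      set v : G := y₀ * c' with hv
      have hY' : y₀ * y₁⁻¹ ∈ H := by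
        have := H.inv_mem hY
        simpa using this
      have hvc : v * c₀⁻¹ = y₀ * y₁⁻¹ * h₀ := by
        rw [hv, hc'eq]; group
      have hvH : v * c₀⁻¹ ∈ H := by rw [hvc]; exact H.mul_mem hY' hh₀
      set h'' : G := v * c₀⁻¹ with hh''
      have hveq : v = h'' * c₀ := by rw [hh'']; group
      by_cases e0 : h'' = h₀
      · have hv0 : v = h₀ * c₀ := by rw [hveq, e0]
        have h1 := (hC (h₀ * c₀)).unique (y₁ := (y₀, c')) (y₂ := (y₁, c'))
          ⟨Or.inr (Or.inl rfl), hc'C, hv0 ▸ rfl⟩ ⟨Or.inr (Or.inr rfl), hc'C, heq0⟩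
        exact hyne (congrArg Prod.fst h1)
      by_cases e1 : h'' = h₁
      · exact i2 (by rw [← hvc]; exact e1)
      · have h1 := (hC v).unique (y₁ := (y₀, c')) (y₂ := (h'', c₀))
          ⟨Or.inr (Or.inl rfl), hc'C, rfl⟩
          ⟨Or.inl ⟨hvH, by rintro (h | h); exacts [e0 h, e1 h]⟩, hc₀C, hveq.symm⟩
        exact hy₀ (by have e : y₀ = h'' := congrArg Prod.fst h1; rw [e]; exact hvH)

lemma inv_shape_E (H : Subgroup G) (h₀ h₁ y₀ y₁ : G) :
    ((H : Set G) \ {h₀, h₁} ∪ {y₀, y₁})⁻¹ =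
      ((H : Set G) \ {h₀⁻¹, h₁⁻¹} ∪ {y₀⁻¹, y₁⁻¹}) := by
  ext x
  simp only [Set.mem_inv, Set.mem_union, Set.mem_diff, Set.mem_insert_iff,
    Set.mem_singleton_iff, SetLike.mem_coe]
  constructor
  · rintro (⟨hH, hne⟩ | (he | he))
    · refine Or.inl ⟨(H.inv_mem_iff).mp hH, ?_⟩
      rintro (rfl | rfl) <;> simp_all
    · exact Or.inr (Or.inl (by rw [← he, inv_inv]))
    · exact Or.inr (Or.inr (by rw [← he, inv_inv]))
  · rintro (⟨hH, hne⟩ | (he | he))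
    · refine Or.inl ⟨H.inv_mem hH, ?_⟩
      rintro (rfl | rfl) <;> simp_all
    · exact Or.inr (Or.inl (by rw [he, inv_inv]))
    · exact Or.inr (Or.inr (by rw [he, inv_inv]))

/-- "Lemma E": the subset `(H \ {h₀, h₁}) ∪ {y₀, y₁}` is not a factor. -/
lemma notFactor_E [Finite G] (H : Subgroup G) (hm : 5 ≤ Nat.card H)
    {h₀ h₁ y₀ y₁ : G} (hh₀ : h₀ ∈ H) (hh₁ : h₁ ∈ H) (hhne : h₀ ≠ h₁)
    (hy₀ : y₀ ∉ H) (hy₁ : y₁ ∉ H) (hyne : y₀ ≠ y₁)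
    (hY : y₁ * y₀⁻¹ ∈ H) (hY2 : y₀⁻¹ * y₁ ∈ H)
    (i1 : y₁ * y₀⁻¹ * h₀ ≠ h₁) (i2 : y₀ * y₁⁻¹ * h₀ ≠ h₁)
    (i1' : y₁⁻¹ * y₀ * h₀⁻¹ ≠ h₁⁻¹) (i2' : y₀⁻¹ * y₁ * h₀⁻¹ ≠ h₁⁻¹) :
    ¬ IsFactor ((H : Set G) \ {h₀, h₁} ∪ {y₀, y₁}) := by
  rintro (hl | hr)
  · exact notLeftFactor_E H hm hh₀ hh₁ hhne hy₀ hy₁ hyne hY i1 i2 hl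
  · have hlf := isLeftFactor_inv_of_isRightFactor hr
    rw [inv_shape_E] at hlf
    refine notLeftFactor_E H hm (H.inv_mem hh₀) (H.inv_mem hh₁)
      (fun h => hhne (by simpa using congrArg Inv.inv h))
      (fun h => hy₀ (by simpa using H.inv_mem h))
      (fun h => hy₁ (by simpa using H.inv_mem h))
      (fun h => hyne (by simpa using congrArg Inv.inv h))
      ?_ ?_ ?_ hlf
    · simpa using H.inv_mem hY2
    · simpa using i1'
    · simpa using i2'

/-- Cardinality of the "Lemma E" subset. -/
lemma card_shape_E [Finite G] (H : Subgroup G) (hm : 2 ≤ Nat.card H)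
    {h₀ h₁ y₀ y₁ : G} (hh₀ : h₀ ∈ H) (hh₁ : h₁ ∈ H) (hhne : h₀ ≠ h₁)
    (hy₀ : y₀ ∉ H) (hy₁ : y₁ ∉ H) (hyne : y₀ ≠ y₁) :
    Nat.card ↥((H : Set G) \ {h₀, h₁} ∪ {y₀, y₁}) = Nat.card H := by
  have hHn : (H : Set G).ncard = Nat.card H := by
    rw [← Nat.card_coe_set_eq]; rfl
  rw [Nat.card_coe_set_eq]
  have hdisj : Disjoint ((H : Set G) \ {h₀, h₁}) {y₀, y₁} := by
    rw [Set.disjoint_right]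
    rintro x (rfl | rfl)
    · exact fun h => hy₀ h.1
    · exact fun h => hy₁ h.1
  have hpair : ({h₀, h₁} : Set G) ⊆ (H : Set G) := by
    rintro x (rfl | rfl) <;> assumption
  rw [Set.ncard_union_eq hdisj (Set.toFinite _) (Set.toFinite _),
    Set.ncard_diff hpair, Set.ncard_pair hhne, Set.ncard_pair hyne, hHn]
  omega

end Stmt19Main

section Stmt19Assembly

open Stmt19Aux

variable {G : Type*} [Group G]

/-- Covering by the two cosets `H` and `wH` when `2|H| = |G|`. -/
lemma coset_cover [Finite G] (H : Subgroup G) (hHG : 2 * Nat.card H = Nat.card G)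
    {w : G} (hw : w ∉ H) (g : G) : g ∈ H ∨ ∃ h ∈ H, g = w * h := by
  have hHn : (H : Set G).ncard = Nat.card H := by
    rw [← Nat.card_coe_set_eq]; rfl
  set U : Set G := (H : Set G) ∪ (w * ·) '' (H : Set G) with hU
  have hdisj : Disjoint (H : Set G) ((w * ·) '' (H : Set G)) := by
    rw [Set.disjoint_left]
    rintro x hx ⟨h, hh, rfl⟩
    exact hw (by simpa [mul_assoc] using H.mul_mem hx (H.inv_mem hh))
  have hcard : U.ncard = Nat.card G := by
    rw [hU, Set.ncard_union_eq hdisj (Set.toFinite _) (Set.toFinite _),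
      Set.ncard_image_of_injective _ (mul_right_injective w), hHn]
    omega
  have hUuniv : U = Set.univ := by
    apply Set.eq_of_subset_of_ncard_le (Set.subset_univ U) ?_ (Set.toFinite _)
    rw [Set.ncard_univ, hcard]
  have hg : g ∈ U := by rw [hUuniv]; trivial
  rcases hg with hg | ⟨h, hh, rfl⟩
  · exact Or.inl hg
  · exact Or.inr ⟨h, hh, rfl⟩

/-- The "Klein four subgroup" case used for nonabelian groups of order 8. -/
lemma klein_case [Finite G] (hyp : ∀ A : Set G, Nat.card A ∣ Nat.card G → IsFactor A)
    (hcard : Nat.card G = 8) {y w : G} (h4 : orderOf y = 4)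
    (hw1 : w ≠ 1) (hw2 : w * w = 1) (hconj : w * y * w⁻¹ = y⁻¹) : False := by
  have hy4 : y ^ 4 = 1 := by rw [← h4]; exact pow_orderOf_eq_one y
  have hz1 : y * y ≠ 1 := by
    intro h
    have : orderOf y ∣ 2 := orderOf_dvd_of_pow_eq_one (by rw [pow_two]; exact h)
    rw [h4] at this; omega
  set z : G := y * y with hzdef
  have hzz : z * z = 1 := by
    have h : (y*y)*(y*y) = y ^ 4 := by
      rw [show (4:ℕ) = 2*2 from rfl, pow_mul, pow_two y, pow_two]
    rw [hzdef, h, hy4]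
  have hinv2 : z⁻¹ = z := inv_eq_of_mul_eq_one_left hzz
  have winv : w⁻¹ = w := inv_eq_of_mul_eq_one_left hw2
  have hwy : w * y = y⁻¹ * w := by rw [← hconj]; group
  have hwz : w * z = z * w := by
    have c1 : w * z = (w * y) * y := by rw [hzdef]; group
    rw [c1, hwy]
    have c2 : y⁻¹ * w * y = y⁻¹ * (w * y) := by group
    rw [c2, hwy, ← hinv2, hzdef]
    group
  have hwzw : w * (z * w) = z := by
    rw [← mul_assoc, hwz, mul_assoc, hw2, mul_one]
  have hKmul : ∀ a b : G, (a = 1 ∨ a = z ∨ a = w ∨ a = z*w) →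
      (b = 1 ∨ b = z ∨ b = w ∨ b = z*w) →
      (a*b = 1 ∨ a*b = z ∨ a*b = w ∨ a*b = z*w) := by
    intro a b ha hb
    rcases ha with rfl|rfl|rfl|rfl <;> rcases hb with rfl|rfl|rfl|rfl
    · exact Or.inl (one_mul _)
    · exact Or.inr (Or.inl (one_mul _))
    · exact Or.inr (Or.inr (Or.inl (one_mul _)))
    · exact Or.inr (Or.inr (Or.inr (one_mul _)))
    · exact Or.inr (Or.inl (mul_one _))
    · exact Or.inl hzz
    · exact Or.inr (Or.inr (Or.inr rfl))
    · exact Or.inr (Or.inr (Or.inl (by rw [← mul_assoc, hzz, one_mul])))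
    · exact Or.inr (Or.inr (Or.inl (mul_one _)))
    · exact Or.inr (Or.inr (Or.inr hwz))
    · exact Or.inl hw2
    · exact Or.inr (Or.inl hwzw)
    · exact Or.inr (Or.inr (Or.inr (mul_one _)))
    · exact Or.inr (Or.inr (Or.inl (by rw [mul_assoc, hwz, ← mul_assoc, hzz, one_mul])))
    · exact Or.inr (Or.inl (by rw [mul_assoc, hw2, mul_one]))
    · exact Or.inl (by rw [mul_assoc, hwzw, hzz])
  let K : Subgroup G :=
    { carrier := {1, z, w, z*w}
      one_mem' := Or.inl rfl
      mul_mem' := fun ha hb => hKmul _ _ ha hb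
      inv_mem' := by
        rintro a (rfl|rfl|rfl|rfl)
        · exact Or.inl (by simp)
        · exact Or.inr (Or.inl hinv2)
        · exact Or.inr (Or.inr (Or.inl winv))
        · exact Or.inr (Or.inr (Or.inr (show (z*w)⁻¹ = z*w by
            rw [mul_inv_rev, winv, hinv2, hwz]))) }
  have memK : ∀ g : G, g ∈ K ↔ (g = 1 ∨ g = z ∨ g = w ∨ g = z*w) := fun g => Iff.rfl
  have hwznez : w ≠ z := by
    intro h
    have hyy : y = y⁻¹ := by
      conv_rhs => rw [← hconj, h, hzdef]
      group
    apply hz1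
    rw [hzdef]
    nth_rewrite 2 [hyy]
    exact mul_inv_cancel y
  have hzw1 : z * w ≠ 1 := by
    intro hzw
    apply hwznez
    have hwz' : w = z⁻¹ * (z * w) := by group
    rw [hzw, mul_one] at hwz'
    rw [hwz']
    exact hinv2
  have hzwz : z * w ≠ z := fun h => hw1 (by rwa [mul_eq_left] at h)
  have hzww : z * w ≠ w := fun h => hz1 (by rwa [mul_eq_right] at h)
  have hwn1 : w ≠ 1 := hw1
  have hKcard : Nat.card K = 4 := by
    have e1 : Nat.card K = ({1, z, w, z*w} : Set G).ncard := by
      rw [← Nat.card_coe_set_eq]; rfl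
    rw [e1]
    rw [Set.ncard_insert_of_notMem (by
        simp only [Set.mem_insert_iff, Set.mem_singleton_iff]
        push_neg
        exact ⟨fun h => hz1 h.symm, fun h => hw1 h.symm, fun h => hzw1 h.symm⟩)
      (Set.toFinite _)]
    rw [Set.ncard_insert_of_notMem (by
        simp only [Set.mem_insert_iff, Set.mem_singleton_iff]
        push_neg
        exact ⟨fun h => hwznez h.symm, fun h => hzwz h.symm⟩) (Set.toFinite _)]
    rw [Set.ncard_insert_of_notMem (by
        simp only [Set.mem_singleton_iff]
        exact fun h => hzww h.symm) (Set.toFinite _)]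
    rw [Set.ncard_singleton]
  have hyK : y ∉ K := by
    rw [memK]
    push_neg
    refine ⟨?_, ?_, ?_, ?_⟩
    · intro h; rw [h, orderOf_one] at h4; omega
    · intro h
      rw [hzdef] at h
      have h1 : y = 1 := left_eq_mul.mp h
      apply hz1
      rw [hzdef, h1, mul_one]
    · intro h
      apply hz1
      rw [hzdef, h]
      exact hw2
    · intro h
      have hw' : w = z⁻¹ * y := by rw [h]; group
      have hw2' : w = y⁻¹ := by
        rw [hw', hzdef, mul_inv_rev, mul_assoc, inv_mul_cancel, mul_one]
      apply hz1
      rw [hzdef, show y*y = (y⁻¹*y⁻¹)⁻¹ from by rw [mul_inv_rev, inv_inv], ← hw2', hw2, inv_one]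
  have ekL : ((y⁻¹ * 1) ^ 2 : G) = z⁻¹ := by
    rw [mul_one, pow_two, ← mul_inv_rev, hzdef]
  have ekR : ((y * 1⁻¹) ^ 2 : G) = z := by
    rw [inv_one, mul_one, pow_two, hzdef]
  have hkL : ((y⁻¹ * 1) ^ 2 : G) ∈ K := by
    rw [ekL]; exact K.inv_mem (Or.inr (Or.inl rfl))
  have hkL1 : ((y⁻¹ * 1) ^ 2 : G) ≠ 1 := by
    rw [ekL]; exact inv_ne_one.mpr hz1
  have hkR : ((y * 1⁻¹) ^ 2 : G) ∈ K := by
    rw [ekR]; exact Or.inr (Or.inl rfl)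
  have hkR1 : ((y * 1⁻¹) ^ 2 : G) ≠ 1 := by
    rw [ekR]; exact hz1
  have hnf := notFactor_D K (by rw [hKcard]; norm_num) K.one_mem hyK 2 2 hkL hkL1 hkR hkR1
  apply hnf
  apply hyp
  rw [card_shape_D K (by rw [hKcard]; norm_num) K.one_mem hyK, hKcard, hcard]
  norm_num

lemma order_cases8 [Finite G] (hcard : Nat.card G = 8) (g : G) :
    orderOf g = 1 ∨ orderOf g = 2 ∨ orderOf g = 4 ∨ orderOf g = 8 := by
  have hdvd : orderOf g ∣ 8 := hcard ▸ orderOf_dvd_natCard g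
  rw [show (8:ℕ) = 2^3 by norm_num] at hdvd
  obtain ⟨i, hi, ho⟩ := (Nat.dvd_prime_pow Nat.prime_two).mp hdvd
  interval_cases i <;> rw [ho] <;> norm_num

lemma caseII_aux [Finite G] (hyp : ∀ A : Set G, Nat.card A ∣ Nat.card G → IsFactor A)
    (hcard : Nat.card G = 8) (hnc8 : ∀ g : G, orderOf g ≠ 8)
    {u v : G} (huv : u * v ≠ v * u) (h4 : orderOf u = 4) : False := by
  have hu1 : u ≠ 1 := by
    intro h; rw [h, orderOf_one] at h4; omega
  have hu4 : u ^ (4:ℕ) = 1 := by rw [← h4]; exact pow_orderOf_eq_one u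
  have hu2ne : u * u ≠ 1 := by
    intro h
    have : orderOf u ∣ 2 := orderOf_dvd_of_pow_eq_one (by rw [pow_two]; exact h)
    rw [h4] at this; omega
  have hvnot : v ∉ Subgroup.zpowers u := by
    intro hv
    obtain ⟨k, hk⟩ := Subgroup.mem_zpowers_iff.mp hv
    apply huv
    rw [← hk, ← zpow_one_add, ← zpow_add_one, add_comm]
  set H := Subgroup.zpowers u with hH
  have hHcard : Nat.card H = 4 := by rw [hH, Nat.card_zpowers, h4]
  have hcover := coset_cover H (by rw [hHcard, hcard]) hvnot
  have hv1 : orderOf v ≠ 1 := by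
    intro h
    exact huv (by rw [orderOf_eq_one_iff.mp h]; simp)
  have h24 : orderOf v = 2 ∨ orderOf v = 4 := by
    rcases order_cases8 hcard v with h|h|h|h
    · exact absurd h hv1
    · exact Or.inl h
    · exact Or.inr h
    · exact absurd h (hnc8 v)
  rcases h24 with h2 | hvo4
  · -- orderOf v = 2
    have hvne1 : v ≠ 1 := by
      intro h; rw [h, orderOf_one] at h2; omega
    have hvv : v * v = 1 := by
      have := pow_orderOf_eq_one v
      rwa [h2, pow_two] at this
    have hconjmem : v * u * v⁻¹ ∈ H := by
      rcases hcover (v * u * v⁻¹) with h | ⟨h, hh, heq⟩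
      · exact h
      · exfalso
        have heq' : v * (u * v⁻¹) = v * h := by rw [← mul_assoc]; exact heq
        have h1 : u * v⁻¹ = h := mul_left_cancel heq'
        have h2' : v⁻¹ ∈ H := by
          have e : v⁻¹ = u⁻¹ * h := by rw [← h1]; group
          rw [e]
          exact H.mul_mem (H.inv_mem (Subgroup.mem_zpowers u)) hh
        exact hvnot (by simpa using H.inv_mem h2')
    obtain ⟨k, hk⟩ := Subgroup.mem_zpowers_iff.mp hconjmem
    have hmod := zpow_mod_orderOf u k
    rw [h4] at hmod
    push_cast at hmod
    have hk' : u ^ (k % (4:ℤ)) = v * u * v⁻¹ := by rw [hmod, hk]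
    have hrange : k % (4:ℤ) = 0 ∨ k % (4:ℤ) = 1 ∨ k % (4:ℤ) = 2 ∨ k % (4:ℤ) = 3 := by
      omega
    rcases hrange with h0 | h1 | h2' | h3
    · rw [h0, zpow_zero] at hk'
      apply hu1
      have : v⁻¹ * (1 : G) * v = v⁻¹ * (v * u * v⁻¹) * v := by rw [hk']
      simpa [mul_assoc] using this.symm
    · rw [h1, zpow_one] at hk'
      apply huv
      conv_lhs => rw [hk']
      group
    · rw [h2'] at hk'
      have e1 : (v * u * v⁻¹) * (v * u * v⁻¹) = v * (u * u) * v⁻¹ := by group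
      have e2 : u ^ (2:ℤ) * u ^ (2:ℤ) = 1 := by
        rw [← zpow_add, show (2+2:ℤ) = ((4:ℕ):ℤ) from by norm_num, zpow_natCast, hu4]
      rw [hk'] at e2
      rw [e1] at e2
      apply hu2ne
      have : v⁻¹ * (v * (u*u) * v⁻¹) * v = v⁻¹ * 1 * v := by rw [e2]
      simpa [mul_assoc] using this
    · rw [h3] at hk'
      have e : u ^ (3:ℤ) = u⁻¹ := by
        rw [show (3:ℤ) = ((4:ℕ):ℤ) + (-1) from by norm_num, zpow_add, zpow_natCast, hu4,
          one_mul, zpow_neg, zpow_one]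
      rw [e] at hk'
      exact klein_case hyp hcard h4 hvne1 hvv hk'.symm
  · -- orderOf v = 4
    have hv2 : v * v ∈ H := by
      rcases hcover (v * v) with h | ⟨h, hh, heq⟩
      · exact h
      · exfalso
        have : v = h := mul_left_cancel heq
        exact hvnot (by rw [this]; exact hh)
    have hv2ne : v * v ≠ 1 := by
      intro h
      have : orderOf v ∣ 2 := orderOf_dvd_of_pow_eq_one (by rw [pow_two]; exact h)
      rw [hvo4] at this; omega
    have ekL : ((v⁻¹ * 1) ^ 2 : G) = (v * v)⁻¹ := by
      rw [mul_one, pow_two, ← mul_inv_rev]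
    have ekR : ((v * 1⁻¹) ^ 2 : G) = v * v := by
      rw [inv_one, mul_one, pow_two]
    have hkL : ((v⁻¹ * 1) ^ 2 : G) ∈ H := by
      rw [ekL]; exact H.inv_mem hv2
    have hkL1 : ((v⁻¹ * 1) ^ 2 : G) ≠ 1 := by
      rw [ekL]; exact inv_ne_one.mpr hv2ne
    have hkR : ((v * 1⁻¹) ^ 2 : G) ∈ H := by
      rw [ekR]; exact hv2
    have hkR1 : ((v * 1⁻¹) ^ 2 : G) ≠ 1 := by
      rw [ekR]; exact hv2ne
    have hnf := notFactor_D H (by rw [hHcard]; norm_num) H.one_mem hvnot 2 2 hkL hkL1 hkR hkR1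
    apply hnf
    apply hyp
    rw [card_shape_D H (by rw [hHcard]; norm_num) H.one_mem hvnot, hHcard, hcard]
    norm_num

lemma caseII [Finite G] (hyp : ∀ A : Set G, Nat.card A ∣ Nat.card G → IsFactor A)
    (hcard : Nat.card G = 8) {u v : G} (huv : u * v ≠ v * u) : False := by
  have hnc8 : ∀ g : G, orderOf g ≠ 8 := by
    intro g hg
    have hcyc : IsCyclic G := isCyclic_of_orderOf_eq_card g (by rw [hcard, hg])
    obtain ⟨s, hs⟩ := hcyc.exists_generator
    obtain ⟨i, hi⟩ := hs u
    obtain ⟨j, hj⟩ := hs v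
    exact huv (by rw [← hi, ← hj, ← zpow_add, ← zpow_add, add_comm])
  have hu1 : orderOf u ≠ 1 := by
    intro h; exact huv (by rw [orderOf_eq_one_iff.mp h]; simp)
  have hv1 : orderOf v ≠ 1 := by
    intro h; exact huv (by rw [orderOf_eq_one_iff.mp h]; simp)
  have hu24 : orderOf u = 2 ∨ orderOf u = 4 := by
    rcases order_cases8 hcard u with h|h|h|h
    · exact absurd h hu1
    · exact Or.inl h
    · exact Or.inr h
    · exact absurd h (hnc8 u)
  have hv24 : orderOf v = 2 ∨ orderOf v = 4 := by
    rcases order_cases8 hcard v with h|h|h|h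
    · exact absurd h hv1
    · exact Or.inl h
    · exact Or.inr h
    · exact absurd h (hnc8 v)
  rcases hu24 with hu2 | hu4
  · rcases hv24 with hv2 | hv4
    · -- both of order 2
      have huu : u * u = 1 := by
        have := pow_orderOf_eq_one u; rwa [hu2, pow_two] at this
      have hvv : v * v = 1 := by
        have := pow_orderOf_eq_one v; rwa [hv2, pow_two] at this
      have huinv : u⁻¹ = u := inv_eq_of_mul_eq_one_left huu
      have hvinv : v⁻¹ = v := inv_eq_of_mul_eq_one_left hvv
      have hyyne : (u*v) * (u*v) ≠ 1 := by
        intro h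
        apply huv
        have e1 : u * v = (u*v)⁻¹ := (inv_eq_of_mul_eq_one_left h).symm
        rw [e1, mul_inv_rev, hvinv, huinv]
      have hy1 : orderOf (u*v) ≠ 1 := by
        intro h
        exact hyyne (by rw [orderOf_eq_one_iff.mp h]; simp)
      have hy2 : orderOf (u*v) ≠ 2 := by
        intro h
        have := pow_orderOf_eq_one (u*v)
        rw [h, pow_two] at this
        exact hyyne this
      have hy4 : orderOf (u*v) = 4 := by
        rcases order_cases8 hcard (u*v) with h|h|h|h
        · exact absurd h hy1
        · exact absurd h hy2
        · exact h
        · exact absurd h (hnc8 (u*v))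
      have hconj : u * (u*v) * u⁻¹ = (u*v)⁻¹ := by
        rw [mul_inv_rev, hvinv, huinv,
          show u * (u*v) * u = (u*u) * (v*u) from by group, huu, one_mul]
      have hune1 : u ≠ 1 := by
        intro h; rw [h, orderOf_one] at hu2; omega
      exact klein_case hyp hcard hy4 hune1 huu hconj
    · exact caseII_aux hyp hcard hnc8 (fun h => huv h.symm) hv4
  · exact caseII_aux hyp hcard hnc8 huv hu4

lemma caseI [Finite G] (hyp : ∀ A : Set G, Nat.card A ∣ Nat.card G → IsFactor A)
    (H : Subgroup G) (hHcard : 6 ≤ Nat.card H)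
    {x : G} (hxn : x ∈ Subgroup.normalizer (H : Set G)) (hx : x ∉ H) : False := by
  have hHn : (H : Set G).ncard = Nat.card H := by
    rw [← Nat.card_coe_set_eq]; rfl
  have hneb : H ≠ ⊥ := by
    intro h
    rw [h, Subgroup.card_bot] at hHcard
    omega
  obtain ⟨h, hhH, hh1⟩ : ∃ h ∈ H, h ≠ (1:G) := by
    obtain ⟨h, hhH, hnb⟩ := SetLike.exists_of_lt
      (bot_lt_iff_ne_bot.mpr hneb : (⊥ : Subgroup G) < H)
    exact ⟨h, hhH, by simpa [Subgroup.mem_bot] using hnb⟩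
  set S : Set G := {1, h, h⁻¹, x*h*x⁻¹, x*h⁻¹*x⁻¹} with hS
  have hScard : S.ncard ≤ 5 := by
    have t4 : ({x*h⁻¹*x⁻¹} : Set G).ncard = 1 := Set.ncard_singleton _
    have t3 := Set.ncard_insert_le (x*h*x⁻¹) ({x*h⁻¹*x⁻¹} : Set G)
    have t2 := Set.ncard_insert_le h⁻¹ ({x*h*x⁻¹, x*h⁻¹*x⁻¹} : Set G)
    have t1 := Set.ncard_insert_le h ({h⁻¹, x*h*x⁻¹, x*h⁻¹*x⁻¹} : Set G)
    have t0 := Set.ncard_insert_le 1 ({h, h⁻¹, x*h*x⁻¹, x*h⁻¹*x⁻¹} : Set G)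
    rw [hS]
    omega
  obtain ⟨h₁, hh₁H, hh₁S⟩ : ∃ h₁ ∈ (H : Set G), h₁ ∉ S := by
    by_contra hcon
    push_neg at hcon
    have := Set.ncard_le_ncard hcon (Set.toFinite _)
    rw [hHn] at this
    omega
  simp only [hS, Set.mem_insert_iff, Set.mem_singleton_iff] at hh₁S
  push_neg at hh₁S
  obtain ⟨hn1, hnh, hnhi, hnc1, hnc2⟩ := hh₁S
  have hconj : ∀ g, g ∈ H ↔ x*g*x⁻¹ ∈ H := Subgroup.mem_normalizer_iff.mp hxn
  have hxh : x * h ∉ H := by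
    intro hc
    apply hx
    have e : x = (x*h)*h⁻¹ := by group
    rw [e]
    exact H.mul_mem hc (H.inv_mem hhH)
  have hxxh : x ≠ x * h := by
    intro hc
    exact hh1 (left_eq_mul.mp hc)
  have hY : (x*h) * x⁻¹ ∈ H := (hconj h).mp hhH
  have hY2 : x⁻¹ * (x*h) ∈ H := by
    rw [show x⁻¹ * (x*h) = h by group]
    exact hhH
  have i1 : (x*h) * x⁻¹ * 1 ≠ h₁ := by
    rw [mul_one]
    intro hc
    exact hnc1 (by rw [← hc])
  have i2 : x * (x*h)⁻¹ * 1 ≠ h₁ := by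
    rw [mul_one]
    intro hc
    exact hnc2 (by rw [← hc]; group)
  have i1' : (x*h)⁻¹ * x * 1⁻¹ ≠ h₁⁻¹ := by
    rw [inv_one, mul_one]
    intro hc
    apply hnh
    have e : (x*h)⁻¹ * x = h⁻¹ := by group
    rw [e] at hc
    exact (inv_injective hc).symm
  have i2' : x⁻¹ * (x*h) * 1⁻¹ ≠ h₁⁻¹ := by
    rw [inv_one, mul_one]
    intro hc
    apply hnhi
    have e : x⁻¹ * (x*h) = h := by group
    rw [e] at hc
    rw [hc, inv_inv]
  have hnf := notFactor_E H (by omega) H.one_mem hh₁H (Ne.symm hn1) hx hxh hxxh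
    hY hY2 i1 i2 i1' i2'
  apply hnf
  apply hyp
  rw [card_shape_E H (by omega) H.one_mem hh₁H (Ne.symm hn1) hx hxh hxxh]
  exact Subgroup.card_subgroup_dvd_card H

/-- The key structural result: the strong CFS property forces commutativity. -/
lemma comm_of_hyp1 [Finite G]
    (hyp : ∀ A : Set G, Nat.card A ∣ Nat.card G → IsFactor A) :
    ∀ a b : G, a * b = b * a := by
  by_contra hnc
  push_neg at hnc
  obtain ⟨u, v, huv⟩ := hnc
  have hnt : Nontrivial G := by
    refine ⟨u, 1, fun h => huv ?_⟩
    rw [h]; simp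
  have hn1 : Nat.card G ≠ 1 := by
    have := Finite.one_lt_card (α := G)
    omega
  set n := Nat.card G with hn
  set q := n.minFac with hq
  have hqp : q.Prime := Nat.minFac_prime hn1
  haveI : Fact q.Prime := ⟨hqp⟩
  have huniq : ∀ {p : ℕ}, p.Prime → p ∣ n → p = q := by
    intro p hp hpn
    by_contra hne
    have hqlt : q < p :=
      lt_of_le_of_ne (Nat.minFac_le_of_dvd hp.two_le hpn) (fun h => hne h.symm)
    haveI : Fact p.Prime := ⟨hp⟩
    obtain ⟨z, hz⟩ := exists_prime_orderOf_dvd_card' p hpn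
    classical
    set A : Set G := ↑((Finset.range q).image (z ^ ·)) with hA
    have hAcard : Nat.card A = q := by
      rw [Nat.card_coe_set_eq, hA, Set.ncard_coe_finset,
        Finset.card_image_of_injOn, Finset.card_range]
      intro i hi j hj hij
      have hi' : i ∈ Set.Iio (orderOf z) := by
        rw [hz]; exact lt_trans (Finset.mem_range.mp hi) hqlt
      have hj' : j ∈ Set.Iio (orderOf z) := by
        rw [hz]; exact lt_trans (Finset.mem_range.mp hj) hqlt
      exact pow_injOn_Iio_orderOf hi' hj' hij
    have hAsub : A ⊆ (Subgroup.zpowers z : Set G) := by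
      intro g hg
      simp only [hA, Finset.coe_image, Set.mem_image, Finset.mem_coe,
        Finset.mem_range] at hg
      obtain ⟨i, _, rfl⟩ := hg
      exact Subgroup.mem_zpowers_iff.mpr ⟨(i:ℤ), by rw [zpow_natCast]⟩
    have hfac := hyp A (by rw [hAcard, hq]; exact Nat.minFac_dvd n)
    have hdvd := card_dvd_of_isFactor hAsub hfac
    rw [hAcard, Nat.card_zpowers, hz] at hdvd
    rcases (Nat.Prime.eq_one_or_self_of_dvd hp q hdvd) with h | h
    · exact hqp.one_lt.ne' h
    · exact hne h.symm
  have hnpow : n = q ^ n.primeFactorsList.length :=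
    Nat.eq_prime_pow_of_unique_prime_dvd (by have := Finite.one_lt_card (α := G); omega)
      (fun hd hdvd => huniq hd hdvd)
  set a := n.primeFactorsList.length with ha
  have hPG : IsPGroup q G := IsPGroup.of_card hnpow
  have ha3 : 3 ≤ a := by
    by_contra hlt
    push_neg at hlt
    interval_cases a
    · rw [pow_zero] at hnpow
      exact hn1 hnpow
    · haveI : IsCyclic G := isCyclic_of_prime_card (p := q) (by rw [← hn]; rw [hnpow, pow_one])
      obtain ⟨s, hs⟩ := IsCyclic.exists_generator (α := G)
      obtain ⟨i, hi⟩ := hs u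
      obtain ⟨j, hj⟩ := hs v
      exact huv (by rw [← hi, ← hj, ← zpow_add, ← zpow_add, add_comm])
    · exact huv (IsPGroup.commutative_of_card_eq_prime_sq (p := q) (by rw [← hn]; exact hnpow) u v)
  haveI : Group.IsNilpotent G := hPG.isNilpotent
  by_cases hq2 : q = 2
  · by_cases ha4 : 4 ≤ a
    · obtain ⟨H, hH⟩ := Sylow.exists_subgroup_card_pow_prime (G := G) q (n := 3)
        (by rw [← hn, hnpow]; exact pow_dvd_pow q (by omega))
      have h6 : 6 ≤ Nat.card H := by rw [hH, hq2]; norm_num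
      have hneT : H ≠ ⊤ := by
        intro htop
        rw [htop, Subgroup.card_top, ← hn, hnpow] at hH
        have := Nat.pow_right_injective hqp.two_le hH
        omega
      obtain ⟨x, hxn, hxH⟩ := SetLike.exists_of_lt
        (normalizerCondition_of_isNilpotent H (lt_top_iff_ne_top.mpr hneT))
      exact caseI hyp H h6 hxn hxH
    · have ha3' : a = 3 := by omega
      have hcard8 : Nat.card G = 8 := by
        rw [← hn, hnpow, ha3', hq2]
        norm_num
      exact caseII hyp hcard8 huv
  · have hq3 : 3 ≤ q := by
      have := hqp.two_le
      omega
    obtain ⟨H, hH⟩ := Sylow.exists_subgroup_card_pow_prime (G := G) q (n := 2)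
      (by rw [← hn, hnpow]; exact pow_dvd_pow q (by omega))
    have h6 : 6 ≤ Nat.card H := by
      rw [hH]
      nlinarith
    have hneT : H ≠ ⊤ := by
      intro htop
      rw [htop, Subgroup.card_top, ← hn, hnpow] at hH
      have := Nat.pow_right_injective hqp.two_le hH
      omega
    obtain ⟨x, hxn, hxH⟩ := SetLike.exists_of_lt
      (normalizerCondition_of_isNilpotent H (lt_top_iff_ne_top.mpr hneT))
    exact caseI hyp H h6 hxn hxH

end Stmt19Assembly

/-- For a finite group `G`, the following are equivalent:
(i) every Lagrange subset of `G` is a factor (the strong CFS property);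
(ii) every Lagrange subset is a left factor;
(iii) every Lagrange subset is a right factor;
(iv) every Lagrange subset is both a left and a right factor;
(v) for every Lagrange subset `A` there is `B ⊆ G` with `G = A · B` and `G = B · A`. -/
theorem stmt_19 {G : Type*} [Group G] [Finite G] :
    [ (∀ A : Set G, Nat.card A ∣ Nat.card G → IsFactor A),
      (∀ A : Set G, Nat.card A ∣ Nat.card G → IsLeftFactor A),
      (∀ A : Set G, Nat.card A ∣ Nat.card G → IsRightFactor A),
      (∀ A : Set G, Nat.card A ∣ Nat.card G → IsLeftFactor A ∧ IsRightFactor A),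
      (∀ A : Set G, Nat.card A ∣ Nat.card G →
        ∃ B : Set G, IsDirectProd A B ∧ IsDirectProd B A) ].TFAE := by
  have swap : (∀ a b : G, a * b = b * a) →
      ∀ {X Y : Set G}, IsDirectProd X Y → IsDirectProd Y X := by
    intro hcomm X Y hXY g
    obtain ⟨⟨p1, p2⟩, ⟨m1, m2, me⟩, uniq⟩ := hXY g
    refine ⟨(p2, p1), ⟨m2, m1, by rw [hcomm]; exact me⟩, ?_⟩
    rintro ⟨q1, q2⟩ ⟨n1, n2, ne⟩
    have h1 := uniq (q2, q1) ⟨n2, n1, by rw [hcomm]; exact ne⟩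
    have e1 : q2 = p1 := congrArg Prod.fst h1
    have e2 : q1 = p2 := congrArg Prod.snd h1
    rw [e1, e2]
  tfae_have 2 → 1 := fun h A hA => Or.inl (h A hA)
  tfae_have 3 → 1 := fun h A hA => Or.inr (h A hA)
  tfae_have 4 → 2 := fun h A hA => (h A hA).1
  tfae_have 4 → 3 := fun h A hA => (h A hA).2
  tfae_have 5 → 4 := by
    intro h A hA
    obtain ⟨B, h1, h2⟩ := h A hA
    exact ⟨⟨B, h1⟩, ⟨B, h2⟩⟩
  tfae_have 1 → 5 := by
    intro h A hA
    have hcomm := comm_of_hyp1 h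
    rcases h A hA with ⟨B, hB⟩ | ⟨B, hB⟩
    · exact ⟨B, hB, swap hcomm hB⟩
    · exact ⟨B, swap hcomm hB, hB⟩
  tfae_finish
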